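/- Let n ≥ 3 and let G be the dihedral group of order 2^{n+1} (Mathlib's DihedralGroup (2^n)). If H₁ and H₂ are distinct subgroups of G of index 2 that are isomorphic as groups, then the Frattini subgroup of H₁ and the Frattini subgroup of H₂ are equal as subgroups of G, and this common Frattini subgroup is a nontrivial normal subgroup of G. -/

import Mathlib

open DihedralGroup Subgroup

namespace DFA

variable (n : ℕ)

instance : NeZero (2 ^ n) := ⟨pow_ne_zero n two_ne_zero⟩

lemma r_inv {m : ℕ} (i : ZMod m) : (r i)⁻¹ = r (-i) :=
  inv_eq_of_mul_eq_one_right (by rw [r_mul_r, add_neg_cancel, one_def])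

lemma sr_inv {m : ℕ} (i : ZMod m) : (sr i)⁻¹ = sr i :=
  inv_eq_of_mul_eq_one_right (sr_mul_self i)

lemma r_pow {m : ℕ} (a : ZMod m) (k : ℕ) : (r a) ^ k = r ((k : ZMod m) * a) := by
  induction k with
  | zero => simp [one_def, -r_zero]
  | succ k ih => rw [pow_succ, ih, r_mul_r]; congr 1; push_cast; ring

/-- The rotation subgroup. -/
def HA : Subgroup (DihedralGroup (2 ^ n)) where
  carrier := {x | ∃ i, x = r i}
  mul_mem' := by rintro _ _ ⟨i, rfl⟩ ⟨j, rfl⟩; exact ⟨i + j, by rw [r_mul_r]⟩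
  one_mem' := ⟨0, one_def⟩
  inv_mem' := by rintro _ ⟨i, rfl⟩; exact ⟨-i, by rw [r_inv]⟩

/-- Even rotations and even reflections. -/
def HB : Subgroup (DihedralGroup (2 ^ n)) where
  carrier := {x | ∃ j, x = r (j + j) ∨ x = sr (j + j)}
  mul_mem' := by
    rintro _ _ ⟨a, rfl | rfl⟩ ⟨b, rfl | rfl⟩
    · exact ⟨a + b, Or.inl (by rw [r_mul_r]; congr 1; ring)⟩
    · exact ⟨b - a, Or.inr (by rw [r_mul_sr]; congr 1; ring)⟩
    · exact ⟨a + b, Or.inr (by rw [sr_mul_r]; congr 1; ring)⟩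
    · exact ⟨b - a, Or.inl (by rw [sr_mul_sr]; congr 1; ring)⟩
  one_mem' := ⟨0, Or.inl (by rw [one_def]; congr 1; ring)⟩
  inv_mem' := by
    rintro _ ⟨a, rfl | rfl⟩
    · exact ⟨-a, Or.inl (by rw [r_inv]; congr 1; ring)⟩
    · exact ⟨a, Or.inr (by rw [sr_inv])⟩

/-- Even rotations and odd reflections. -/
def HC : Subgroup (DihedralGroup (2 ^ n)) where
  carrier := {x | ∃ j, x = r (j + j) ∨ x = sr (j + j + 1)}
  mul_mem' := by
    rintro _ _ ⟨a, rfl | rfl⟩ ⟨b, rfl | rfl⟩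
    · exact ⟨a + b, Or.inl (by rw [r_mul_r]; congr 1; ring)⟩
    · exact ⟨b - a, Or.inr (by rw [r_mul_sr]; congr 1; ring)⟩
    · exact ⟨a + b, Or.inr (by rw [sr_mul_r]; congr 1; ring)⟩
    · exact ⟨b - a, Or.inl (by rw [sr_mul_sr]; congr 1; ring)⟩
  one_mem' := ⟨0, Or.inl (by rw [one_def]; congr 1; ring)⟩
  inv_mem' := by
    rintro _ ⟨a, rfl | rfl⟩
    · exact ⟨-a, Or.inl (by rw [r_inv]; congr 1; ring)⟩
    · exact ⟨a, Or.inr (by rw [sr_inv])⟩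

/-- Even rotations. -/
def Z2 : Subgroup (DihedralGroup (2 ^ n)) where
  carrier := {x | ∃ j, x = r (j + j)}
  mul_mem' := by
    rintro _ _ ⟨a, rfl⟩ ⟨b, rfl⟩; exact ⟨a + b, by rw [r_mul_r]; congr 1; ring⟩
  one_mem' := ⟨0, by rw [one_def]; congr 1; ring⟩
  inv_mem' := by rintro _ ⟨a, rfl⟩; exact ⟨-a, by rw [r_inv]; congr 1; ring⟩

/-- Rotations divisible by 4. -/
def Z4 : Subgroup (DihedralGroup (2 ^ n)) where
  carrier := {x | ∃ j, x = r (4 * j)}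
  mul_mem' := by
    rintro _ _ ⟨a, rfl⟩ ⟨b, rfl⟩; exact ⟨a + b, by rw [r_mul_r]; congr 1; ring⟩
  one_mem' := ⟨0, by rw [one_def]; congr 1; ring⟩
  inv_mem' := by rintro _ ⟨a, rfl⟩; exact ⟨-a, by rw [r_inv]; congr 1; ring⟩

def DB0 : Subgroup (DihedralGroup (2 ^ n)) where
  carrier := {x | ∃ j, x = r (4 * j) ∨ x = sr (4 * j)}
  mul_mem' := by
    rintro _ _ ⟨a, rfl | rfl⟩ ⟨b, rfl | rfl⟩
    · exact ⟨a + b, Or.inl (by rw [r_mul_r]; congr 1; ring)⟩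
    · exact ⟨b - a, Or.inr (by rw [r_mul_sr]; congr 1; ring)⟩
    · exact ⟨a + b, Or.inr (by rw [sr_mul_r]; congr 1; ring)⟩
    · exact ⟨b - a, Or.inl (by rw [sr_mul_sr]; congr 1; ring)⟩
  one_mem' := ⟨0, Or.inl (by rw [one_def]; congr 1; ring)⟩
  inv_mem' := by
    rintro _ ⟨a, rfl | rfl⟩
    · exact ⟨-a, Or.inl (by rw [r_inv]; congr 1; ring)⟩
    · exact ⟨a, Or.inr (by rw [sr_inv])⟩

def DC1 : Subgroup (DihedralGroup (2 ^ n)) where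
  carrier := {x | ∃ j, x = r (4 * j) ∨ x = sr (4 * j + 1)}
  mul_mem' := by
    rintro _ _ ⟨a, rfl | rfl⟩ ⟨b, rfl | rfl⟩
    · exact ⟨a + b, Or.inl (by rw [r_mul_r]; congr 1; ring)⟩
    · exact ⟨b - a, Or.inr (by rw [r_mul_sr]; congr 1; ring)⟩
    · exact ⟨a + b, Or.inr (by rw [sr_mul_r]; congr 1; ring)⟩
    · exact ⟨b - a, Or.inl (by rw [sr_mul_sr]; congr 1; ring)⟩
  one_mem' := ⟨0, Or.inl (by rw [one_def]; congr 1; ring)⟩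
  inv_mem' := by
    rintro _ ⟨a, rfl | rfl⟩
    · exact ⟨-a, Or.inl (by rw [r_inv]; congr 1; ring)⟩
    · exact ⟨a, Or.inr (by rw [sr_inv])⟩

-- membership lemmas
lemma mem_HA_iff (x : DihedralGroup (2 ^ n)) : x ∈ HA n ↔ ∃ i, x = r i := Iff.rfl
lemma mem_HB_iff (x : DihedralGroup (2 ^ n)) :
    x ∈ HB n ↔ ∃ j, x = r (j + j) ∨ x = sr (j + j) := Iff.rfl
lemma mem_HC_iff (x : DihedralGroup (2 ^ n)) :
    x ∈ HC n ↔ ∃ j, x = r (j + j) ∨ x = sr (j + j + 1) := Iff.rfl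
lemma mem_Z2_iff (x : DihedralGroup (2 ^ n)) : x ∈ Z2 n ↔ ∃ j, x = r (j + j) := Iff.rfl
lemma mem_Z4_iff (x : DihedralGroup (2 ^ n)) : x ∈ Z4 n ↔ ∃ j, x = r (4 * j) := Iff.rfl
lemma mem_DB0_iff (x : DihedralGroup (2 ^ n)) :
    x ∈ DB0 n ↔ ∃ j, x = r (4 * j) ∨ x = sr (4 * j) := Iff.rfl
lemma mem_DC1_iff (x : DihedralGroup (2 ^ n)) :
    x ∈ DC1 n ↔ ∃ j, x = r (4 * j) ∨ x = sr (4 * j + 1) := Iff.rfl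

@[simp] lemma r_mem_HB (i : ZMod (2 ^ n)) : r i ∈ HB n ↔ ∃ j, i = j + j := by
  rw [mem_HB_iff]; simp
@[simp] lemma sr_mem_HB (i : ZMod (2 ^ n)) : sr i ∈ HB n ↔ ∃ j, i = j + j := by
  rw [mem_HB_iff]; simp
@[simp] lemma r_mem_HC (i : ZMod (2 ^ n)) : r i ∈ HC n ↔ ∃ j, i = j + j := by
  rw [mem_HC_iff]; simp
@[simp] lemma sr_mem_HC (i : ZMod (2 ^ n)) : sr i ∈ HC n ↔ ∃ j, i = j + j + 1 := by
  rw [mem_HC_iff]; simp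
@[simp] lemma r_mem_Z2 (i : ZMod (2 ^ n)) : r i ∈ Z2 n ↔ ∃ j, i = j + j := by
  rw [mem_Z2_iff]; simp
@[simp] lemma sr_mem_Z2 (i : ZMod (2 ^ n)) : ¬ sr i ∈ Z2 n := by
  rw [mem_Z2_iff]; simp
@[simp] lemma r_mem_Z4 (i : ZMod (2 ^ n)) : r i ∈ Z4 n ↔ ∃ j, i = 4 * j := by
  rw [mem_Z4_iff]; simp
@[simp] lemma sr_mem_Z4 (i : ZMod (2 ^ n)) : ¬ sr i ∈ Z4 n := by
  rw [mem_Z4_iff]; simp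
@[simp] lemma r_mem_DB0 (i : ZMod (2 ^ n)) : r i ∈ DB0 n ↔ ∃ j, i = 4 * j := by
  rw [mem_DB0_iff]; simp
@[simp] lemma sr_mem_DB0 (i : ZMod (2 ^ n)) : sr i ∈ DB0 n ↔ ∃ j, i = 4 * j := by
  rw [mem_DB0_iff]; simp
@[simp] lemma r_mem_DC1 (i : ZMod (2 ^ n)) : r i ∈ DC1 n ↔ ∃ j, i = 4 * j := by
  rw [mem_DC1_iff]; simp
@[simp] lemma sr_mem_DC1 (i : ZMod (2 ^ n)) : sr i ∈ DC1 n ↔ ∃ j, i = 4 * j + 1 := by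
  rw [mem_DC1_iff]; simp


lemma dvd2 (hn : 3 ≤ n) : (2 : ℕ) ∣ 2 ^ n := dvd_pow_self 2 (by omega)
lemma dvd4 (hn : 3 ≤ n) : (4 : ℕ) ∣ 2 ^ n := by
  have : (4 : ℕ) = 2 ^ 2 := by norm_num
  rw [this]; exact pow_dvd_pow 2 (by omega)
lemma dvd8 (hn : 3 ≤ n) : (8 : ℕ) ∣ 2 ^ n := by
  have : (8 : ℕ) = 2 ^ 3 := by norm_num
  rw [this]; exact pow_dvd_pow 2 hn

lemma odd_ne_even (hn : 3 ≤ n) (j k : ZMod (2 ^ n)) : j + j ≠ k + k + 1 := by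
  intro h
  have h' := congrArg (ZMod.castHom (dvd2 n hn) (ZMod 2)) h
  rw [map_add, map_add, map_add, map_one] at h'
  revert h'
  generalize (ZMod.castHom (dvd2 n hn) (ZMod 2)) j = a
  generalize (ZMod.castHom (dvd2 n hn) (ZMod 2)) k = b
  revert a b; decide

lemma quad_ne (hn : 3 ≤ n) (j k : ZMod (2 ^ n)) : 4 * j ≠ 4 * k + 2 := by
  intro h
  have h' := congrArg (ZMod.castHom (dvd4 n hn) (ZMod 4)) h
  rw [map_add, map_mul, map_mul, map_ofNat, map_ofNat] at h'
  revert h'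
  generalize (ZMod.castHom (dvd4 n hn) (ZMod 4)) j = a
  generalize (ZMod.castHom (dvd4 n hn) (ZMod 4)) k = b
  revert a b; decide

lemma four_ne_zero (hn : 3 ≤ n) : (4 : ZMod (2 ^ n)) ≠ 0 := by
  intro h
  have h' := congrArg (ZMod.castHom (dvd8 n hn) (ZMod 8)) h
  rw [map_ofNat, map_zero] at h'
  revert h'; decide

lemma parity (i : ZMod (2 ^ n)) : ∃ j, i = j + j ∨ i = j + j + 1 := by
  have hv : ((i.val : ℕ) : ZMod (2 ^ n)) = i := ZMod.natCast_zmod_val i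
  rcases Nat.even_or_odd i.val with ⟨t, ht⟩ | ⟨t, ht⟩
  · exact ⟨(t : ZMod (2 ^ n)), Or.inl (by rw [← hv, ht]; push_cast; ring)⟩
  · exact ⟨(t : ZMod (2 ^ n)), Or.inr (by rw [← hv, ht]; push_cast; ring)⟩

lemma quad_split (j : ZMod (2 ^ n)) :
    (∃ k, j + j = 4 * k) ∨ (∃ k, j + j = 4 * k + 2) := by
  obtain ⟨k, hk | hk⟩ := parity n j
  · exact Or.inl ⟨k, by rw [hk]; ring⟩
  · exact Or.inr ⟨k, by rw [hk]; ring⟩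

lemma coatom_of_index_two {G : Type*} [Group G] {M : Subgroup G} (h : M.index = 2) :
    IsCoatom M := by
  constructor
  · intro htop; rw [htop, Subgroup.index_top] at h; omega
  · intro K hK
    have hmul : M.relIndex K * K.index = 2 := by rw [Subgroup.relIndex_mul_index hK.le, h]
    have hdvd : K.index ∣ 2 := dvd_of_mul_left_eq _ hmul
    rcases (Nat.prime_two.eq_one_or_self_of_dvd _ hdvd) with h1 | h2
    · exact Subgroup.index_eq_one.mp h1
    · exfalso
      rw [h2] at hmul
      have : M.relIndex K = 1 := by omega
      exact absurd (Subgroup.relIndex_eq_one.mp this) (not_le_of_gt hK)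

lemma index_two_of_coatom {H : Type*} [Group H] [Finite H] (hp : IsPGroup 2 H)
    {M : Subgroup H} (hM : IsCoatom M) : M.index = 2 := by
  haveI : Fact (Nat.Prime 2) := ⟨Nat.prime_two⟩
  haveI hnil : Group.IsNilpotent H := hp.isNilpotent
  haveI hMn : M.Normal := Subgroup.NormalizerCondition.normal_of_coatom _ normalizerCondition_of_isNilpotent hM
  obtain ⟨x, -, hxM⟩ := SetLike.exists_of_lt (lt_top_iff_ne_top.2 hM.1)
  have hg0 : (QuotientGroup.mk x : H ⧸ M) ≠ 1 := by
    simpa [QuotientGroup.eq_one_iff] using hxM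
  obtain ⟨k, hk⟩ := (hp.to_quotient M) (QuotientGroup.mk x : H ⧸ M)
  have hdvd : orderOf (QuotientGroup.mk x : H ⧸ M) ∣ 2 ^ k := orderOf_dvd_of_pow_eq_one hk
  obtain ⟨j, hjk, hj⟩ := (Nat.dvd_prime_pow Nat.prime_two).mp hdvd
  have hj0 : j ≠ 0 := by
    rintro rfl
    rw [pow_zero] at hj
    exact hg0 (orderOf_eq_one_iff.mp hj)
  set g : H ⧸ M := (QuotientGroup.mk x : H ⧸ M) ^ (2 ^ (j - 1)) with hgdef
  have hg2 : g ^ 2 = 1 := by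
    rw [hgdef, ← pow_mul, show 2 ^ (j - 1) * 2 = 2 ^ j by
      rw [← pow_succ]; congr 1; omega, ← hj, pow_orderOf_eq_one]
  have hgne : g ≠ 1 := by
    intro hg1
    have := orderOf_dvd_of_pow_eq_one (hgdef ▸ hg1)
    rw [hj] at this
    have := (Nat.pow_dvd_pow_iff_le_right (by norm_num)).mp this
    omega
  have horder : orderOf g = 2 := orderOf_eq_prime hg2 hgne
  have hzb : (⊥ : Subgroup (H ⧸ M)) < Subgroup.zpowers g := by
    refine lt_of_le_of_ne bot_le (fun hb => hgne ?_)
    have : g ∈ Subgroup.zpowers g := Subgroup.mem_zpowers g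
    rw [← hb] at this
    simpa using this
  have hlt : M < Subgroup.comap (QuotientGroup.mk' M) (Subgroup.zpowers g) := by
    have hle : M ≤ Subgroup.comap (QuotientGroup.mk' M) (Subgroup.zpowers g) := by
      intro m hm
      rw [Subgroup.mem_comap, show (QuotientGroup.mk' M) m = 1 from
        (QuotientGroup.eq_one_iff m).mpr hm]
      exact one_mem _
    have hmemy : x ^ 2 ^ (j - 1) ∈ Subgroup.comap (QuotientGroup.mk' M) (Subgroup.zpowers g) := by
      rw [Subgroup.mem_comap, map_pow]
      exact Subgroup.mem_zpowers g
    have hnot : x ^ 2 ^ (j - 1) ∉ M := by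
      intro hmem
      exact hgne ((QuotientGroup.eq_one_iff _).mpr hmem)
    exact lt_of_le_of_ne hle (fun he => hnot (by rw [he]; exact hmemy))
  have htop' := hM.2 _ hlt
  have htop : Subgroup.zpowers g = ⊤ := by
    have := congrArg (Subgroup.map (QuotientGroup.mk' M)) htop'
    rw [Subgroup.map_comap_eq_self_of_surjective (QuotientGroup.mk'_surjective M),
      Subgroup.map_top_of_surjective _ (QuotientGroup.mk'_surjective M)] at this
    exact this
  have : M.index = Nat.card (H ⧸ M) := rfl
  rw [this, ← Subgroup.card_top (G := H ⧸ M), ← htop, Nat.card_zpowers, horder]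

lemma sq_mem_frattini {H : Type*} [Group H] [Finite H] (hp : IsPGroup 2 H) (x : H) :
    x * x ∈ frattini H := by
  have : frattini H = ⨅ M ∈ {M : Subgroup H | IsCoatom M}, M := rfl
  rw [this]
  simp only [Subgroup.mem_iInf]
  intro M hM
  exact Subgroup.mul_self_mem_of_index_two (index_two_of_coatom hp hM) x

lemma frattini_map_le {G : Type*} [Group G] (H X : Subgroup G)
    (hX : (X.subgroupOf H).index = 2) : (frattini H).map H.subtype ≤ X := by
  have h1 : frattini H ≤ X.subgroupOf H := frattini_le_coatom (coatom_of_index_two hX)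
  calc (frattini H).map H.subtype ≤ (X.subgroupOf H).map H.subtype := Subgroup.map_mono h1
    _ = X ⊓ H := Subgroup.subgroupOf_map_subtype X H
    _ ≤ X := inf_le_left

lemma comm_of_iso {A B : Type*} [Group A] [Group B] (e : A ≃* B)
    (h : ∀ x y : A, x * y = y * x) (x y : B) : x * y = y * x := by
  obtain ⟨a, rfl⟩ := e.surjective x
  obtain ⟨b, rfl⟩ := e.surjective y
  rw [← map_mul, ← map_mul, h]

lemma mul_mem_of_not_mem {G : Type*} [Group G] {H : Subgroup G} (h : H.index = 2)
    {x y : G} (hx : x ∉ H) (hy : y ∉ H) : x * y ∈ H := by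
  rw [Subgroup.mul_mem_iff_of_index_two h]
  exact iff_of_false hx hy


lemma classify (hn : 3 ≤ n) (H : Subgroup (DihedralGroup (2 ^ n))) (h : H.index = 2) :
    H = HA n ∨ H = HB n ∨ H = HC n := by
  have hsq : ∀ x : DihedralGroup (2 ^ n), x * x ∈ H :=
    fun x => Subgroup.mul_self_mem_of_index_two h x
  have hrEven : ∀ j : ZMod (2 ^ n), r (j + j) ∈ H := fun j => by
    have := hsq (r j); rwa [r_mul_r] at this
  -- if `r 1 ∉ H`, then rotations in `H` are exactly the even ones
  have hrot : (r 1 : DihedralGroup (2 ^ n)) ∉ H →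
      ∀ i : ZMod (2 ^ n), (r i ∈ H ↔ ∃ j, i = j + j) := by
    intro hr1 i
    constructor
    · intro hmem
      obtain ⟨j, hj | hj⟩ := parity n i
      · exact ⟨j, hj⟩
      · exfalso
        apply hr1
        have h1 : (r (-j + -j) * r i : DihedralGroup (2 ^ n)) ∈ H :=
          mul_mem (hrEven (-j)) hmem
        rw [r_mul_r, hj] at h1
        have : -j + -j + (j + j + 1) = (1 : ZMod (2 ^ n)) := by ring
        rwa [this] at h1
    · rintro ⟨j, rfl⟩; exact hrEven j
  by_cases hr1 : (r 1 : DihedralGroup (2 ^ n)) ∈ H <;>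
    by_cases hs0 : (sr 0 : DihedralGroup (2 ^ n)) ∈ H
  · -- H = ⊤ : contradiction
    exfalso
    have htop : H = ⊤ := by
      rw [Subgroup.eq_top_iff']
      rintro (i | i)
      · have : (r 1 : DihedralGroup (2 ^ n)) ^ (i.val) ∈ H := pow_mem hr1 _
        rwa [r_one_pow, ZMod.natCast_zmod_val] at this
      · have : (sr 0 * r i : DihedralGroup (2 ^ n)) ∈ H := by
          apply mul_mem hs0
          have : (r 1 : DihedralGroup (2 ^ n)) ^ (i.val) ∈ H := pow_mem hr1 _
          rwa [r_one_pow, ZMod.natCast_zmod_val] at this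
        rwa [sr_mul_r, zero_add] at this
    rw [htop, Subgroup.index_top] at h; omega
  · -- H = HA
    left
    ext x
    rcases x with i | i
    · simp only [mem_HA_iff]
      constructor
      · intro _; exact ⟨i, rfl⟩
      · intro _
        have : ((i.val : ℕ) : ZMod (2 ^ n)) = i := ZMod.natCast_zmod_val i
        have hp : (r 1 : DihedralGroup (2 ^ n)) ^ (i.val) ∈ H := pow_mem hr1 _
        rwa [r_one_pow, this] at hp
    · constructor
      · intro hmem
        exfalso
        apply hs0
        have h1 : (sr i * r (-i) : DihedralGroup (2 ^ n)) ∈ H := by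
          apply mul_mem hmem
          have hp : (r 1 : DihedralGroup (2 ^ n)) ^ ((-i).val) ∈ H := pow_mem hr1 _
          rwa [r_one_pow, ZMod.natCast_zmod_val] at hp
        rwa [sr_mul_r, add_neg_cancel] at h1
      · intro hmem
        exfalso
        rw [mem_HA_iff] at hmem
        obtain ⟨j, hj⟩ := hmem
        exact absurd hj (by simp)
  · -- H = HB
    right; left
    have hsr : ∀ i : ZMod (2 ^ n), (sr i ∈ H ↔ r i ∈ H) := by
      intro i
      constructor
      · intro hmem
        have h1 : (sr 0 * sr i : DihedralGroup (2 ^ n)) ∈ H := mul_mem hs0 hmem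
        rwa [sr_mul_sr, sub_zero] at h1
      · intro hmem
        have h1 : (sr 0 * r i : DihedralGroup (2 ^ n)) ∈ H := mul_mem hs0 hmem
        rwa [sr_mul_r, zero_add] at h1
    ext x
    rcases x with i | i
    · rw [r_mem_HB, hrot hr1 i]
    · rw [sr_mem_HB, hsr i, hrot hr1 i]
  · -- H = HC
    right; right
    have hs1 : (sr 1 : DihedralGroup (2 ^ n)) ∈ H := by
      have hrn : (r (-1) : DihedralGroup (2 ^ n)) ∉ H := by
        intro hmem
        apply hr1
        have := inv_mem hmem
        rwa [r_inv, neg_neg] at this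
      have := mul_mem_of_not_mem h hrn hs0
      rwa [r_mul_sr, zero_sub, neg_neg] at this
    have hsr : ∀ i : ZMod (2 ^ n), (sr i ∈ H ↔ r (i - 1) ∈ H) := by
      intro i
      constructor
      · intro hmem
        have h1 : (sr 1 * sr i : DihedralGroup (2 ^ n)) ∈ H := mul_mem hs1 hmem
        rwa [sr_mul_sr] at h1
      · intro hmem
        have h1 : (sr 1 * r (i - 1) : DihedralGroup (2 ^ n)) ∈ H := mul_mem hs1 hmem
        rw [sr_mul_r] at h1
        have : (1 : ZMod (2 ^ n)) + (i - 1) = i := by ring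
        rwa [this] at h1
    ext x
    rcases x with i | i
    · rw [r_mem_HC, hrot hr1 i]
    · rw [sr_mem_HC, hsr i, hrot hr1 (i - 1)]
      constructor
      · rintro ⟨j, hj⟩; exact ⟨j, by rw [← hj]; ring⟩
      · rintro ⟨j, hj⟩; exact ⟨j, by rw [hj]; ring⟩


lemma HA_comm : ∀ x y : HA n, x * y = y * x := by
  rintro ⟨x, hx⟩ ⟨y, hy⟩
  obtain ⟨i, rfl⟩ := hx
  obtain ⟨j, rfl⟩ := hy
  apply Subtype.ext
  simp only [Subgroup.coe_mul, Subgroup.coe_mk, r_mul_r]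
  rw [add_comm]

lemma HB_not_comm (hn : 3 ≤ n) : ¬ (∀ x y : HB n, x * y = y * x) := by
  intro hcomm
  have h := hcomm ⟨r (1 + 1), by rw [r_mem_HB]; exact ⟨1, rfl⟩⟩
    ⟨sr 0, by rw [sr_mem_HB]; exact ⟨0, by ring⟩⟩
  have h' := congrArg Subtype.val h
  simp only [Subgroup.coe_mul, Subgroup.coe_mk, r_mul_sr, sr_mul_r] at h'
  rw [DihedralGroup.sr.injEq] at h'
  exact four_ne_zero n hn (by linear_combination -h')

lemma HC_not_comm (hn : 3 ≤ n) : ¬ (∀ x y : HC n, x * y = y * x) := by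
  intro hcomm
  have h := hcomm ⟨r (1 + 1), by rw [r_mem_HC]; exact ⟨1, rfl⟩⟩
    ⟨sr (0 + 0 + 1), by rw [sr_mem_HC]; exact ⟨0, rfl⟩⟩
  have h' := congrArg Subtype.val h
  simp only [Subgroup.coe_mul, Subgroup.coe_mk, r_mul_sr, sr_mul_r] at h'
  rw [DihedralGroup.sr.injEq] at h'
  exact four_ne_zero n hn (by linear_combination -h')

lemma idx_Z2_HB : ((Z2 n).subgroupOf (HB n)).index = 2 := by
  rw [Subgroup.index_eq_two_iff]
  refine ⟨⟨sr 0, by rw [sr_mem_HB]; exact ⟨0, by ring⟩⟩, ?_⟩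
  rintro ⟨b, hb⟩
  obtain ⟨j, rfl | rfl⟩ := hb
  · refine Or.inr ⟨?_, ?_⟩
    · rw [Subgroup.mem_subgroupOf]; exact ⟨j, rfl⟩
    · rw [Subgroup.mem_subgroupOf]
      simp only [Subgroup.coe_mul, Subgroup.coe_mk, r_mul_sr]
      exact sr_mem_Z2 n _
  · refine Or.inl ⟨?_, ?_⟩
    · rw [Subgroup.mem_subgroupOf]
      simp only [Subgroup.coe_mul, Subgroup.coe_mk, sr_mul_sr]
      rw [r_mem_Z2]
      exact ⟨-j, by ring⟩
    · rw [Subgroup.mem_subgroupOf]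
      exact sr_mem_Z2 n _

lemma idx_Z2_HC : ((Z2 n).subgroupOf (HC n)).index = 2 := by
  rw [Subgroup.index_eq_two_iff]
  refine ⟨⟨sr (0 + 0 + 1), by rw [sr_mem_HC]; exact ⟨0, rfl⟩⟩, ?_⟩
  rintro ⟨b, hb⟩
  obtain ⟨j, rfl | rfl⟩ := hb
  · refine Or.inr ⟨?_, ?_⟩
    · rw [Subgroup.mem_subgroupOf]; exact ⟨j, rfl⟩
    · rw [Subgroup.mem_subgroupOf]
      simp only [Subgroup.coe_mul, Subgroup.coe_mk, r_mul_sr]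
      exact sr_mem_Z2 n _
  · refine Or.inl ⟨?_, ?_⟩
    · rw [Subgroup.mem_subgroupOf]
      simp only [Subgroup.coe_mul, Subgroup.coe_mk, sr_mul_sr]
      rw [r_mem_Z2]
      exact ⟨-j, by ring⟩
    · rw [Subgroup.mem_subgroupOf]
      exact sr_mem_Z2 n _

lemma idx_DB0_HB (hn : 3 ≤ n) : ((DB0 n).subgroupOf (HB n)).index = 2 := by
  rw [Subgroup.index_eq_two_iff]
  refine ⟨⟨r (1 + 1), by rw [r_mem_HB]; exact ⟨1, rfl⟩⟩, ?_⟩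
  rintro ⟨b, hb⟩
  obtain ⟨j, rfl | rfl⟩ := hb
  · simp only [Subgroup.mem_subgroupOf, Subgroup.coe_mul, Subgroup.coe_mk, r_mul_r, r_mem_DB0]
    rcases quad_split n j with ⟨t, ht⟩ | ⟨t, ht⟩
    · refine Or.inr ⟨⟨t, ht⟩, ?_⟩
      rintro ⟨k, hk⟩
      exact quad_ne n hn k t (by linear_combination ht - hk)
    · refine Or.inl ⟨⟨t + 1, by linear_combination ht⟩, ?_⟩
      rintro ⟨k, hk⟩
      exact quad_ne n hn k t (by linear_combination ht - hk)
  · simp only [Subgroup.mem_subgroupOf, Subgroup.coe_mul, Subgroup.coe_mk, sr_mul_r, sr_mem_DB0]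
    rcases quad_split n j with ⟨t, ht⟩ | ⟨t, ht⟩
    · refine Or.inr ⟨⟨t, ht⟩, ?_⟩
      rintro ⟨k, hk⟩
      exact quad_ne n hn k t (by linear_combination ht - hk)
    · refine Or.inl ⟨⟨t + 1, by linear_combination ht⟩, ?_⟩
      rintro ⟨k, hk⟩
      exact quad_ne n hn k t (by linear_combination ht - hk)

lemma idx_DC1_HC (hn : 3 ≤ n) : ((DC1 n).subgroupOf (HC n)).index = 2 := by
  rw [Subgroup.index_eq_two_iff]
  refine ⟨⟨r (1 + 1), by rw [r_mem_HC]; exact ⟨1, rfl⟩⟩, ?_⟩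
  rintro ⟨b, hb⟩
  obtain ⟨j, rfl | rfl⟩ := hb
  · simp only [Subgroup.mem_subgroupOf, Subgroup.coe_mul, Subgroup.coe_mk, r_mul_r, r_mem_DC1]
    rcases quad_split n j with ⟨t, ht⟩ | ⟨t, ht⟩
    · refine Or.inr ⟨⟨t, ht⟩, ?_⟩
      rintro ⟨k, hk⟩
      exact quad_ne n hn k t (by linear_combination ht - hk)
    · refine Or.inl ⟨⟨t + 1, by linear_combination ht⟩, ?_⟩
      rintro ⟨k, hk⟩
      exact quad_ne n hn k t (by linear_combination ht - hk)
  · simp only [Subgroup.mem_subgroupOf, Subgroup.coe_mul, Subgroup.coe_mk, sr_mul_r, sr_mem_DC1]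
    rcases quad_split n j with ⟨t, ht⟩ | ⟨t, ht⟩
    · refine Or.inr ⟨⟨t, by linear_combination ht⟩, ?_⟩
      rintro ⟨k, hk⟩
      exact quad_ne n hn k t (by linear_combination ht - hk)
    · refine Or.inl ⟨⟨t + 1, by linear_combination ht⟩, ?_⟩
      rintro ⟨k, hk⟩
      exact quad_ne n hn k t (by linear_combination ht - hk)


lemma is2group : IsPGroup 2 (DihedralGroup (2 ^ n)) := by
  apply IsPGroup.of_card (n := n + 1)
  rw [DihedralGroup.nat_card, pow_succ, mul_comm]

lemma inf_B_le_Z4 {x : DihedralGroup (2 ^ n)} (h1 : x ∈ Z2 n) (h2 : x ∈ DB0 n) :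
    x ∈ Z4 n := by
  obtain ⟨j, rfl⟩ := h1
  rw [r_mem_DB0] at h2
  obtain ⟨k, hk⟩ := h2
  rw [r_mem_Z4]
  exact ⟨k, hk⟩

lemma inf_C_le_Z4 {x : DihedralGroup (2 ^ n)} (h1 : x ∈ Z2 n) (h2 : x ∈ DC1 n) :
    x ∈ Z4 n := by
  obtain ⟨j, rfl⟩ := h1
  rw [r_mem_DC1] at h2
  obtain ⟨k, hk⟩ := h2
  rw [r_mem_Z4]
  exact ⟨k, hk⟩

lemma Z4_le_frattini_map (H : Subgroup (DihedralGroup (2 ^ n)))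
    (h2 : (r 2 : DihedralGroup (2 ^ n)) ∈ H) :
    Z4 n ≤ (frattini H).map H.subtype := by
  have hp : IsPGroup 2 H := (is2group n).to_subgroup H
  have h4 : (r 4 : DihedralGroup (2 ^ n)) ∈ H := by
    have := mul_mem h2 h2
    rwa [r_mul_r, show (2 : ZMod (2 ^ n)) + 2 = 4 by norm_num] at this
  have h4f : (r 4 : DihedralGroup (2 ^ n)) ∈ (frattini H).map H.subtype := by
    rw [Subgroup.mem_map]
    refine ⟨⟨r 4, h4⟩, ?_, rfl⟩
    have hsq := sq_mem_frattini hp ⟨r 2, h2⟩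
    have heq : ((⟨r 2, h2⟩ : H) * ⟨r 2, h2⟩ : H) = ⟨r 4, h4⟩ := by
      apply Subtype.ext
      simp only [Subgroup.coe_mul, Subgroup.coe_mk, r_mul_r]
      norm_num
    rwa [heq] at hsq
  intro x hx
  obtain ⟨j, rfl⟩ := hx
  have : (r (4 * j) : DihedralGroup (2 ^ n)) = (r 4) ^ (j.val) := by
    rw [r_pow, ZMod.natCast_zmod_val, mul_comm]
  rw [this]
  exact pow_mem h4f _

lemma frattini_HB (hn : 3 ≤ n) : (frattini (HB n)).map (HB n).subtype = Z4 n := by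
  refine le_antisymm ?_ ?_
  · intro x hx
    exact inf_B_le_Z4 n (frattini_map_le _ _ (idx_Z2_HB n) hx)
      (frattini_map_le _ _ (idx_DB0_HB n hn) hx)
  · apply Z4_le_frattini_map
    rw [r_mem_HB]
    exact ⟨1, by norm_num⟩

lemma frattini_HC (hn : 3 ≤ n) : (frattini (HC n)).map (HC n).subtype = Z4 n := by
  refine le_antisymm ?_ ?_
  · intro x hx
    exact inf_C_le_Z4 n (frattini_map_le _ _ (idx_Z2_HC n) hx)
      (frattini_map_le _ _ (idx_DC1_HC n hn) hx)
  · apply Z4_le_frattini_map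
    rw [r_mem_HC]
    exact ⟨1, by norm_num⟩

lemma Z4_normal : (Z4 n).Normal := by
  constructor
  rintro x hx g
  obtain ⟨j, rfl⟩ := hx
  rcases g with i | i
  · rw [r_inv, r_mul_r, r_mul_r, r_mem_Z4]
    exact ⟨j, by ring⟩
  · rw [sr_inv, sr_mul_r, sr_mul_sr, r_mem_Z4]
    exact ⟨-j, by ring⟩

lemma Z4_ne_bot (hn : 3 ≤ n) : Z4 n ≠ ⊥ := by
  intro hbot
  have h4 : (r 4 : DihedralGroup (2 ^ n)) ∈ Z4 n := by
    rw [r_mem_Z4]; exact ⟨1, by norm_num⟩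
  rw [hbot, Subgroup.mem_bot, one_def, DihedralGroup.r.injEq] at h4
  exact four_ne_zero n hn h4

end DFA

theorem dihedral_isomorphic_index_two_subgroups_share_frattini
    (n : ℕ) (hn : 3 ≤ n)
    (H₁ H₂ : Subgroup (DihedralGroup (2 ^ n)))
    (h₁ : H₁.index = 2) (h₂ : H₂.index = 2)
    (hne : H₁ ≠ H₂) (hiso : Nonempty (H₁ ≃* H₂)) :
    (frattini H₁).map H₁.subtype = (frattini H₂).map H₂.subtype ∧
      (frattini H₁).map H₁.subtype ≠ ⊥ ∧
      ((frattini H₁).map H₁.subtype).Normal := by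
  obtain ⟨e⟩ := hiso
  rcases DFA.classify n hn H₁ h₁ with rfl | rfl | rfl <;>
    rcases DFA.classify n hn H₂ h₂ with rfl | rfl | rfl
  · exact absurd rfl hne
  · exact absurd (DFA.comm_of_iso e (DFA.HA_comm n)) (DFA.HB_not_comm n hn)
  · exact absurd (DFA.comm_of_iso e (DFA.HA_comm n)) (DFA.HC_not_comm n hn)
  · exact absurd (DFA.comm_of_iso e.symm (DFA.HA_comm n)) (DFA.HB_not_comm n hn)
  · exact absurd rfl hne
  · refine ⟨?_, ?_, ?_⟩
    · rw [DFA.frattini_HB n hn, DFA.frattini_HC n hn]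
    · rw [DFA.frattini_HB n hn]; exact DFA.Z4_ne_bot n hn
    · rw [DFA.frattini_HB n hn]; exact DFA.Z4_normal n
  · exact absurd (DFA.comm_of_iso e.symm (DFA.HA_comm n)) (DFA.HC_not_comm n hn)
  · refine ⟨?_, ?_, ?_⟩
    · rw [DFA.frattini_HC n hn, DFA.frattini_HB n hn]
    · rw [DFA.frattini_HC n hn]; exact DFA.Z4_ne_bot n hn
    · rw [DFA.frattini_HC n hn]; exact DFA.Z4_normal n
  · exact absurd rfl hne
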